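/- arXiv:1407.4679 — 3 statements merged into one kernel-verified Lean document; each statement's English description precedes it below -/
import Mathlib

section
/- ∫_0^1 arctan(x)/(1+x) dx = (π/8) log 2. -/
open Real intervalIntegral Set

lemma arctan_key {t : ℝ} (ht : t ∈ Set.Icc (0:ℝ) 1) :
    Real.arctan ((1 - t) / (1 + t)) = Real.pi / 4 - Real.arctan t := by
  obtain ⟨h0, h1⟩ := ht
  have hden : (0:ℝ) < 1 + t := by linarith
  have hmul : ((1 - t) / (1 + t)) * t < 1 := by
    rw [div_mul_eq_mul_div, div_lt_one hden]
    nlinarith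
  have := Real.arctan_add hmul
  have harg : ((1 - t) / (1 + t) + t) / (1 - (1 - t) / (1 + t) * t) = 1 := by
    rw [div_eq_one_iff_eq]
    · field_simp
      ring
    · field_simp
      intro h; rw [div_eq_zero_iff] at h; rcases h with h | h <;> nlinarith [sq_nonneg t]
  rw [harg, Real.arctan_one] at this
  linarith

lemma log_two_integral : ∫ t in (0:ℝ)..1, 1 / (1 + t) = Real.log 2 := by
  have h : ∀ t ∈ Set.uIcc (0:ℝ) 1, HasDerivAt (fun x => Real.log (1 + x)) (1 / (1 + t)) t := by
    intro t ht
    rw [Set.uIcc_of_le (by norm_num)] at ht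
    have hden : (0:ℝ) < 1 + t := by linarith [ht.1]
    have : HasDerivAt (fun x : ℝ => 1 + x) 1 t := by simpa using (hasDerivAt_id t).const_add 1
    simpa using (this.log hden.ne')
  have hint : IntervalIntegrable (fun t : ℝ => 1 / (1 + t)) MeasureTheory.volume 0 1 := by
    apply ContinuousOn.intervalIntegrable
    apply ContinuousOn.div continuousOn_const (by fun_prop)
    intro t ht
    rw [Set.uIcc_of_le (by norm_num)] at ht
    have := ht.1
    intro h; linarith [ht.1]
  have := intervalIntegral.integral_eq_sub_of_hasDerivAt h hint
  rw [this]; norm_num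

theorem stmt_6 :
    ∫ x in (0:ℝ)..1, Real.arctan x / (1 + x) = Real.pi / 8 * Real.log 2 := by
  set I := ∫ x in (0:ℝ)..1, Real.arctan x / (1 + x) with hI
  have huIcc : Set.uIcc (0:ℝ) 1 = Set.Icc 0 1 := Set.uIcc_of_le (by norm_num)
  -- substitution f t = (1-t)/(1+t)
  set f : ℝ → ℝ := fun t => (1 - t) / (1 + t) with hf
  set f' : ℝ → ℝ := fun t => -2 / (1 + t) ^ 2 with hf'
  set g : ℝ → ℝ := fun x => Real.arctan x / (1 + x) with hg
  have hderiv : ∀ t ∈ Set.uIcc (0:ℝ) 1, HasDerivAt f (f' t) t := by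
    intro t ht
    rw [huIcc] at ht
    have hden : (0:ℝ) < 1 + t := by linarith [ht.1]
    have h1 : HasDerivAt (fun x : ℝ => 1 - x) (-1) t := by
      simpa using ((hasDerivAt_id t).const_sub 1)
    have h2 : HasDerivAt (fun x : ℝ => 1 + x) 1 t := by
      simpa using (hasDerivAt_id t).const_add 1
    have := h1.div h2 hden.ne'
    have e : (-1 * (1 + t) - (1 - t) * 1) = (-2:ℝ) := by ring
    rw [e] at this
    exact this
  have hf'cont : ContinuousOn f' (Set.uIcc (0:ℝ) 1) := by
    rw [huIcc]
    apply ContinuousOn.div continuousOn_const (by fun_prop)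
    intro t ht
    have := ht.1
    positivity
  have himg : f '' Set.uIcc (0:ℝ) 1 ⊆ Set.Icc 0 1 := by
    rw [huIcc]
    rintro _ ⟨t, ⟨h0, h1⟩, rfl⟩
    have hden : (0:ℝ) < 1 + t := by linarith
    constructor
    · apply div_nonneg (by linarith) hden.le
    · rw [div_le_one hden]; linarith
  have hgcont : ContinuousOn g (f '' Set.uIcc (0:ℝ) 1) := by
    apply ContinuousOn.mono _ himg
    apply ContinuousOn.div Real.continuous_arctan.continuousOn (by fun_prop)
    intro x hx
    have := hx.1
    intro h; linarith
  have hsub := intervalIntegral.integral_comp_smul_deriv' hderiv hf'cont hgcont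
  have hf0 : f 0 = 1 := by norm_num [hf]
  have hf1 : f 1 = 0 := by norm_num [hf]
  rw [hf0, hf1, intervalIntegral.integral_symm 0 1] at hsub
  -- simplify integrand on LHS
  have hcongr : ∀ t ∈ Set.uIcc (0:ℝ) 1,
      f' t • (g ∘ f) t = -(Real.pi / 4 * (1 / (1 + t)) - Real.arctan t / (1 + t)) := by
    intro t ht
    rw [huIcc] at ht
    obtain ⟨h0, h1⟩ := ht
    have hden : (0:ℝ) < 1 + t := by linarith
    have harc := arctan_key ⟨h0, h1⟩
    have hd2 : 1 + (1 - t) / (1 + t) = 2 / (1 + t) := by field_simp; ring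
    simp only [hf', hg, hf, Function.comp, smul_eq_mul, hd2, harc]
    field_simp
  have hL := intervalIntegral.integral_congr (μ := MeasureTheory.volume) hcongr
  rw [hL] at hsub
  have hint1 : IntervalIntegrable (fun t : ℝ => Real.pi / 4 * (1 / (1 + t)))
      MeasureTheory.volume 0 1 := by
    apply ContinuousOn.intervalIntegrable
    apply ContinuousOn.mul continuousOn_const
    apply ContinuousOn.div continuousOn_const (by fun_prop)
    intro t ht
    rw [huIcc] at ht
    intro h; linarith [ht.1]
  have hint2 : IntervalIntegrable (fun t : ℝ => Real.arctan t / (1 + t))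
      MeasureTheory.volume 0 1 := by
    apply ContinuousOn.intervalIntegrable
    apply ContinuousOn.div Real.continuous_arctan.continuousOn (by fun_prop)
    intro t ht
    rw [huIcc] at ht
    intro h; linarith [ht.1]
  rw [intervalIntegral.integral_neg, intervalIntegral.integral_sub hint1 hint2,
    intervalIntegral.integral_const_mul, log_two_integral] at hsub
  have : -(Real.pi / 4 * Real.log 2 - I) = -I := by simpa [hI] using hsub
  have hpi : I = Real.pi / 4 * Real.log 2 - I := by linarith
  linarith
end

section
/- For every real a > 0, the limit as n → ∞ of ∑_{k=1}^n σ(k)/(n² + a k²) equals (π²/(12a)) log(1+a). -/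
open Filter Real intervalIntegral

lemma phi_lip {c n : ℝ} (hc : 0 < c) (hn : 0 < n) (x y : ℝ) :
    |x / (n^2 + c*x^2) - y / (n^2 + c*y^2)| ≤ |x - y| / n^2 := by
  have hx : 0 < n^2 + c*x^2 := by positivity
  have hy : 0 < n^2 + c*y^2 := by positivity
  have hn2 : 0 < n^2 := by positivity
  rw [div_sub_div _ _ (ne_of_gt hx) (ne_of_gt hy)]
  have heq : x * (n^2 + c*y^2) - (n^2 + c*x^2) * y = (x - y) * (n^2 - c*x*y) := by ring
  rw [heq, abs_div, abs_mul, abs_of_pos (mul_pos hx hy),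
    div_le_div_iff₀ (mul_pos hx hy) hn2]
  have key : |n^2 - c*x*y| * n^2 ≤ (n^2 + c*x^2) * (n^2 + c*y^2) := by
    rcases abs_cases (n^2 - c*x*y) with ⟨h, _⟩ | ⟨h, _⟩ <;> rw [h] <;>
      nlinarith [mul_nonneg (mul_nonneg hn2.le hc.le) (sq_nonneg (x-y)),
        mul_nonneg (mul_nonneg hn2.le hc.le) (sq_nonneg (x+y)), sq_nonneg (c*x*y),
        mul_nonneg (mul_nonneg hn2.le hc.le) (sq_nonneg x),
        mul_nonneg (mul_nonneg hn2.le hc.le) (sq_nonneg y), sq_nonneg (n^2)]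
  calc |x - y| * |n^2 - c*x*y| * n^2 = |x-y| * (|n^2 - c*x*y| * n^2) := by ring
    _ ≤ |x-y| * ((n^2 + c*x^2) * (n^2 + c*y^2)) :=
        mul_le_mul_of_nonneg_left key (abs_nonneg _)

lemma integral_phi {c n : ℝ} (hc : 0 < c) (hn : 0 < n) (T : ℝ) :
    ∫ x in (0:ℝ)..T, x / (n^2 + c*x^2)
      = (Real.log (n^2 + c*T^2) - Real.log (n^2)) / (2*c) := by
  have h : ∀ x : ℝ, HasDerivAt (fun x => Real.log (n^2 + c*x^2) / (2*c)) (x / (n^2 + c*x^2)) x := by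
    intro x
    have hx : 0 < n^2 + c*x^2 := by positivity
    have h1 : HasDerivAt (fun x : ℝ => n^2 + c*x^2) (c*(2*x)) x := by
      simpa using ((hasDerivAt_pow 2 x).const_mul c).const_add (n^2)
    have h3 := ((Real.hasDerivAt_log (ne_of_gt hx)).comp x h1).div_const (2*c)
    refine HasDerivAt.congr_deriv h3 ?_
    have hc0 : c ≠ 0 := ne_of_gt hc
    field_simp
  rw [intervalIntegral.integral_eq_sub_of_hasDerivAt (fun x _ => h x)]
  · rw [show (0:ℝ)^2 = 0 by norm_num]
    ring
  · apply Continuous.intervalIntegrable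
    exact continuous_id.div (by continuity) (fun x => by positivity)

lemma lemA (a : ℝ) (ha : 0 < a) (m : ℕ) (hm : 1 ≤ m) :
    Filter.Tendsto (fun n : ℕ => ∑ d ∈ Finset.Icc 1 (n/m),
        (d:ℝ) / ((n:ℝ)^2 + (a*(m:ℝ)^2) * (d:ℝ)^2)) Filter.atTop
      (nhds (Real.log (1+a) / (2*(a*(m:ℝ)^2)))) := by
  set c : ℝ := a*(m:ℝ)^2 with hc_def
  have hmR : (0:ℝ) < m := by exact_mod_cast hm
  have hc : 0 < c := by positivity
  set L : ℝ := Real.log (1+a) / (2*c) with hL_def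
  rw [← tendsto_sub_nhds_zero_iff]
  refine squeeze_zero_norm' (a := fun n : ℕ => 2 / (n:ℝ)) ?_ ?_
  · filter_upwards [eventually_ge_atTop 1] with n hn1
    have hnR : (0:ℝ) < n := by exact_mod_cast hn1
    have hn2 : (0:ℝ) < (n:ℝ)^2 := by positivity
    set N : ℕ := n / m with hN_def
    set φ : ℝ → ℝ := fun x => x / ((n:ℝ)^2 + c*x^2) with hφ_def
    have hφcont : Continuous φ := by
      apply continuous_id.div (by continuity)
      intro x; positivity
    have hint : ∀ p q : ℝ, IntervalIntegrable φ MeasureTheory.volume p q :=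
      fun p q => hφcont.intervalIntegrable p q
    have hNle : (N:ℝ) ≤ (n:ℝ)/m := Nat.cast_div_le
    have hNlt : (n:ℝ)/m < N + 1 := by
      rw [div_lt_iff₀ hmR]
      have : n < (N+1)*m := (Nat.div_lt_iff_lt_mul (by omega)).mp (Nat.lt_succ_self N)
      exact_mod_cast this
    have hmm : (1:ℝ) ≤ m := by exact_mod_cast hm
    have hNn : (N:ℝ) ≤ (n:ℝ) := hNle.trans (by
      rw [div_le_iff₀ hmR]; exact le_mul_of_one_le_right hnR.le hmm)
    have hfull : ∫ x in (0:ℝ)..((n:ℝ)/m), φ x = L := by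
      rw [hφ_def]
      simp only []
      rw [integral_phi hc hnR]
      have h1 : (n:ℝ)^2 + c*((n:ℝ)/m)^2 = (n:ℝ)^2 * (1+a) := by
        field_simp [hc_def]; ring
      rw [h1, Real.log_mul (ne_of_gt hn2) (by positivity), hL_def]
      ring
    -- per-step comparison
    have hstep : ∀ i : ℕ, |φ ((1:ℝ)+i) - ∫ x in (i:ℝ)..((i:ℝ)+1), φ x| ≤ 1/(n:ℝ)^2 := by
      intro i
      have h0 : φ ((1:ℝ)+i) = ∫ x in (i:ℝ)..((i:ℝ)+1), (φ ((1:ℝ)+i)) := by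
        rw [intervalIntegral.integral_const]; simp
      rw [h0, ← intervalIntegral.integral_sub intervalIntegrable_const (hint _ _)]
      have hb : ∀ x ∈ Set.uIoc (i:ℝ) ((i:ℝ)+1), ‖φ ((1:ℝ)+i) - φ x‖ ≤ 1/(n:ℝ)^2 := by
        intro x hx
        rw [Set.uIoc_of_le (by linarith)] at hx
        rw [Real.norm_eq_abs]
        refine le_trans (phi_lip hc hnR _ _) ?_
        have h1 : |(1:ℝ)+i - x| ≤ 1 := by
          rw [abs_le]; constructor <;> [linarith [hx.2]; linarith [hx.1]]
        exact div_le_div_of_nonneg_right h1 hn2.le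
      have := intervalIntegral.norm_integral_le_of_norm_le_const hb
      rw [Real.norm_eq_abs] at this
      refine this.trans ?_
      simp
    -- sum as range
    have hsum : (∑ d ∈ Finset.Icc 1 N, (d:ℝ) / ((n:ℝ)^2 + c*(d:ℝ)^2))
        = ∑ i ∈ Finset.range N, φ ((1:ℝ)+i) := by
      rw [← Finset.Ico_add_one_right_eq_Icc, Finset.sum_Ico_eq_sum_range]
      simp only [Nat.succ_sub_one, hφ_def]
      refine Finset.sum_congr rfl fun i _ => ?_
      push_cast; ring_nf
    have hadj : ∑ i ∈ Finset.range N, ∫ x in (i:ℝ)..((i:ℝ)+1), φ x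
        = ∫ x in (0:ℝ)..(N:ℝ), φ x := by
      have := intervalIntegral.sum_integral_adjacent_intervals
        (a := fun i : ℕ => (i:ℝ)) (n := N) (f := φ) (μ := MeasureTheory.volume)
        (fun k _ => hint _ _)
      simp only [Nat.cast_zero, Nat.cast_add, Nat.cast_one] at this
      exact this
    have hsplit : ∫ x in (0:ℝ)..((n:ℝ)/m), φ x
        = (∫ x in (0:ℝ)..(N:ℝ), φ x) + ∫ x in (N:ℝ)..((n:ℝ)/m), φ x :=
      (intervalIntegral.integral_add_adjacent_intervals (hint _ _) (hint _ _)).symm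
    have htail : |∫ x in (N:ℝ)..((n:ℝ)/m), φ x| ≤ 1/(n:ℝ) := by
      have hb : ∀ x ∈ Set.uIoc (N:ℝ) ((n:ℝ)/m), ‖φ x‖ ≤ 1/(n:ℝ) := by
        intro x hx
        rw [Set.uIoc_of_le hNle] at hx
        have hx0 : 0 ≤ x := le_trans (Nat.cast_nonneg N) hx.1.le
        have hxn : x ≤ (n:ℝ) := hx.2.trans ((div_le_iff₀ hmR).mpr (le_mul_of_one_le_right hnR.le (by exact_mod_cast hm)))
        rw [Real.norm_eq_abs, hφ_def]
        have hpos : (0:ℝ) < (n:ℝ)^2 + c*x^2 := by positivity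
        rw [abs_of_nonneg (by positivity)]
        rw [div_le_div_iff₀ hpos hnR]
        nlinarith [mul_nonneg (mul_nonneg hc.le hx0) (sq_nonneg x)]
      have := intervalIntegral.norm_integral_le_of_norm_le_const hb
      rw [Real.norm_eq_abs] at this
      refine this.trans ?_
      have : |(n:ℝ)/m - N| ≤ 1 := by rw [abs_le]; constructor <;> linarith
      calc 1/(n:ℝ) * |(n:ℝ)/m - (N:ℝ)| ≤ 1/(n:ℝ) * 1 :=
            mul_le_mul_of_nonneg_left this (by positivity)
        _ = 1/(n:ℝ) := mul_one _
    -- combine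
    have hmain : |(∑ i ∈ Finset.range N, φ ((1:ℝ)+i)) - ∫ x in (0:ℝ)..(N:ℝ), φ x|
        ≤ (N:ℝ)/(n:ℝ)^2 := by
      rw [← hadj, ← Finset.sum_sub_distrib]
      refine (Finset.abs_sum_le_sum_abs _ _).trans ?_
      refine (Finset.sum_le_sum fun i _ => hstep i).trans ?_
      rw [Finset.sum_const, Finset.card_range, nsmul_eq_mul]
      exact le_of_eq (by ring)
    rw [Real.norm_eq_abs, hsum]
    have : (∑ i ∈ Finset.range N, φ ((1:ℝ)+i)) - L
        = ((∑ i ∈ Finset.range N, φ ((1:ℝ)+i)) - ∫ x in (0:ℝ)..(N:ℝ), φ x)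
          - ∫ x in (N:ℝ)..((n:ℝ)/m), φ x := by
      rw [← hfull, hsplit]; ring
    rw [this]
    refine (abs_sub _ _).trans ?_
    have h1 : (N:ℝ)/(n:ℝ)^2 ≤ 1/(n:ℝ) := by
      rw [div_le_div_iff₀ hn2 hnR]
      nlinarith [hNn, hnR.le]
    calc _ ≤ (N:ℝ)/(n:ℝ)^2 + 1/(n:ℝ) := add_le_add hmain htail
      _ ≤ 1/(n:ℝ) + 1/(n:ℝ) := add_le_add h1 le_rfl
      _ = 2/(n:ℝ) := by ring
  · simpa using tendsto_const_div_atTop_nhds_zero_nat 2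

lemma swap_sum (n : ℕ) (F : ℕ → ℕ → ℝ) :
    ∑ k ∈ Finset.Icc 1 n, ∑ d ∈ k.divisors, F d k
      = ∑ m ∈ Finset.Icc 1 n, ∑ d ∈ Finset.Icc 1 (n/m), F d (d*m) := by
  rw [Finset.sum_sigma', Finset.sum_sigma']
  refine Finset.sum_nbij' (i := fun p => ⟨p.1 / p.2, p.2⟩) (j := fun p => ⟨p.2 * p.1, p.2⟩)
    ?_ ?_ ?_ ?_ ?_
  · rintro ⟨k, d⟩ hp
    simp only [Finset.mem_sigma, Finset.mem_Icc, Nat.mem_divisors] at hp ⊢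
    obtain ⟨⟨hk1, hkn⟩, hd, hk0⟩ := hp
    have hd0 : 0 < d := Nat.pos_of_dvd_of_pos hd (by omega)
    have hm1 : 1 ≤ k / d := Nat.div_pos (Nat.le_of_dvd (by omega) hd) hd0
    refine ⟨⟨hm1, le_trans (Nat.div_le_self _ _) hkn⟩, hd0, ?_⟩
    rw [Nat.le_div_iff_mul_le hm1]
    rw [Nat.mul_div_cancel' hd]
    exact hkn
  · rintro ⟨m, d⟩ hp
    simp only [Finset.mem_sigma, Finset.mem_Icc, Nat.mem_divisors] at hp ⊢
    obtain ⟨⟨hm1, hmn⟩, hd1, hdn⟩ := hp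
    have hdm : d * m ≤ n := by
      rw [Nat.le_div_iff_mul_le (by omega : 0 < m)] at hdn
      exact hdn
    exact ⟨⟨Nat.one_le_iff_ne_zero.mpr (Nat.mul_ne_zero (by omega) (by omega)), hdm⟩, Dvd.intro m rfl, Nat.mul_ne_zero (by omega) (by omega)⟩
  · rintro ⟨k, d⟩ hp
    simp only [Finset.mem_sigma, Finset.mem_Icc, Nat.mem_divisors] at hp
    obtain ⟨⟨hk1, hkn⟩, hd, hk0⟩ := hp
    simp only [Sigma.mk.inj_iff, heq_eq_eq, and_true]
    exact Nat.mul_div_cancel' hd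
  · rintro ⟨m, d⟩ hp
    simp only [Finset.mem_sigma, Finset.mem_Icc, Nat.mem_divisors] at hp
    obtain ⟨⟨hm1, hmn⟩, hd1, hdn⟩ := hp
    simp only [Sigma.mk.inj_iff, heq_eq_eq, and_true]
    exact Nat.mul_div_cancel_left m (by omega)
  · rintro ⟨k, d⟩ hp
    simp only [Finset.mem_sigma, Finset.mem_Icc, Nat.mem_divisors] at hp
    obtain ⟨⟨hk1, hkn⟩, hd, hk0⟩ := hp
    simp only []
    rw [Nat.mul_div_cancel' hd]

theorem stmt_8 (a : ℝ) (ha : 0 < a) :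
    Filter.Tendsto
      (fun n : ℕ => ∑ k ∈ Finset.Icc 1 n, (ArithmeticFunction.sigma 1 k : ℝ) / ((n : ℝ) ^ 2 + a * (k : ℝ) ^ 2))
      Filter.atTop (nhds (Real.pi ^ 2 / (12 * a) * Real.log (1 + a))) := by
  set G : ℕ → ℕ → ℝ := fun n m => ∑ d ∈ Finset.Icc 1 (n/m),
      (d:ℝ) / ((n:ℝ)^2 + (a*(m:ℝ)^2) * (d:ℝ)^2) with hG_def
  set g : ℕ → ℝ := fun m => Real.log (1+a) / (2*a) * (1/(m:ℝ)^2) with hg_def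
  -- rewrite each partial sum as a tsum
  have heq : ∀ n : ℕ, (∑ k ∈ Finset.Icc 1 n,
      (ArithmeticFunction.sigma 1 k : ℝ) / ((n : ℝ) ^ 2 + a * (k : ℝ) ^ 2))
      = ∑' m : ℕ, G n m := by
    intro n
    have h1 : ∀ k ∈ Finset.Icc 1 n, (ArithmeticFunction.sigma 1 k : ℝ) / ((n : ℝ) ^ 2 + a * (k : ℝ) ^ 2)
        = ∑ d ∈ k.divisors, (d:ℝ) / ((n : ℝ) ^ 2 + a * (k : ℝ) ^ 2) := by
      intro k _
      rw [← Finset.sum_div]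
      congr 1
      rw [ArithmeticFunction.sigma_apply]
      push_cast
      simp [pow_one]
    rw [Finset.sum_congr rfl h1,
      swap_sum n (fun d k => (d:ℝ) / ((n : ℝ) ^ 2 + a * (k : ℝ) ^ 2))]
    have h2 : ∀ m ∈ Finset.Icc 1 n, (∑ d ∈ Finset.Icc 1 (n/m),
        (d:ℝ) / ((n : ℝ) ^ 2 + a * ((d*m : ℕ) : ℝ) ^ 2)) = G n m := by
      intro m _
      refine Finset.sum_congr rfl fun d _ => ?_
      push_cast
      ring_nf
    rw [Finset.sum_congr rfl h2]
    refine (tsum_eq_sum ?_).symm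
    intro m hm
    rw [Finset.mem_Icc] at hm
    have : n / m = 0 := by
      rcases Nat.eq_zero_or_pos m with h | h
      · simp [h]
      · exact Nat.div_eq_of_lt (by omega)
    simp [hG_def, this]
  -- the limit identity for g
  have hzeta := (hasSum_zeta_two.mul_left (Real.log (1+a) / (2*a))).tsum_eq
  have hgsum : ∑' m : ℕ, g m = Real.pi ^ 2 / (12 * a) * Real.log (1 + a) := by
    rw [hg_def]
    simp only []
    rw [hzeta]
    field_simp
    ring
  rw [← hgsum]
  refine Tendsto.congr (fun n => (heq n).symm) ?_
  apply tendsto_tsum_of_dominated_convergence (bound := fun m : ℕ => 4/((m:ℝ)+1)^2)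
  · have h : Summable (fun m : ℕ => 4/((m:ℝ)^2)) :=
      (Real.summable_one_div_nat_pow.mpr one_lt_two).mul_left 4 |>.congr
        (fun m => by rw [mul_one_div])
    have := (summable_nat_add_iff 1).mpr h
    refine this.congr fun m => ?_
    push_cast
    ring_nf
  · intro m
    rcases Nat.eq_zero_or_pos m with rfl | hm
    · have : ∀ n : ℕ, G n 0 = 0 := by intro n; simp [hG_def]
      have hg0 : g 0 = 0 := by simp [hg_def]
      rw [hg0]
      exact Tendsto.congr (fun n => (this n).symm) tendsto_const_nhds
    · have := lemA a ha m hm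
      have hmR : (0:ℝ) < m := by exact_mod_cast hm
      have hx : Real.log (1+a) / (2*(a*(m:ℝ)^2)) = g m := by
        rw [hg_def]; simp only []; rw [mul_one_div, div_div, mul_assoc]
      rw [← hx]
      exact this
  · filter_upwards [eventually_ge_atTop 1] with n hn1
    intro m
    have hnR : (0:ℝ) < n := by exact_mod_cast hn1
    have hGnonneg : 0 ≤ G n m := by
      apply Finset.sum_nonneg
      intro d _
      positivity
    rw [Real.norm_eq_abs, abs_of_nonneg hGnonneg]
    rcases Nat.eq_zero_or_pos m with rfl | hm
    · simp [hG_def]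
    · have hmR : (0:ℝ) < m := by exact_mod_cast hm
      set N : ℕ := n / m with hN_def
      have hb : G n m ≤ (N:ℝ) * ((N:ℝ)/(n:ℝ)^2) := by
        rw [hG_def]
        simp only []
        have : ∀ d ∈ Finset.Icc 1 N, (d:ℝ) / ((n:ℝ)^2 + (a*(m:ℝ)^2) * (d:ℝ)^2)
            ≤ (N:ℝ)/(n:ℝ)^2 := by
          intro d hd
          rw [Finset.mem_Icc] at hd
          have hdN : (d:ℝ) ≤ N := by exact_mod_cast hd.2
          have hd0 : (0:ℝ) ≤ d := Nat.cast_nonneg d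
          have hN0' : (0:ℝ) ≤ N := Nat.cast_nonneg N
          exact div_le_div₀ hN0' hdN (by positivity)
            (le_add_of_nonneg_right (by positivity))
        calc G n m ≤ ∑ d ∈ Finset.Icc 1 N, (N:ℝ)/(n:ℝ)^2 := Finset.sum_le_sum this
          _ ≤ (N:ℝ) * ((N:ℝ)/(n:ℝ)^2) := by
              rw [Finset.sum_const, nsmul_eq_mul]
              have hcard : ((Finset.Icc 1 N).card : ℝ) ≤ (N:ℝ) := by
                have hc' : (Finset.Icc 1 N).card = N := by simp
                rw [hc']
              exact mul_le_mul_of_nonneg_right hcard (by positivity)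
      have hNle : (N:ℝ) ≤ (n:ℝ)/m := Nat.cast_div_le
      have h2 : (N:ℝ) * ((N:ℝ)/(n:ℝ)^2) ≤ 1/(m:ℝ)^2 := by
        have hN0 : (0:ℝ) ≤ N := Nat.cast_nonneg N
        calc (N:ℝ) * ((N:ℝ)/(n:ℝ)^2) = (N:ℝ)^2/(n:ℝ)^2 := by ring
          _ ≤ ((n:ℝ)/m)^2/(n:ℝ)^2 := by gcongr
          _ = 1/(m:ℝ)^2 := by field_simp
      have h3 : 1/(m:ℝ)^2 ≤ 4/((m:ℝ)+1)^2 := by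
        have hm1 : (1:ℝ) ≤ m := by exact_mod_cast hm
        rw [div_le_div_iff₀ (by positivity) (by positivity)]
        nlinarith [hm1, sq_nonneg ((m:ℝ)-1)]
      exact hb.trans (h2.trans h3)
end

section
/- For every α ≥ 0, (1/n^(α+1)) ∑_{k=1}^n k^(α-1) log(k/n) φ(k) converges to −6/(π²(α+1)²). -/
open Finset Filter Real Asymptotics Topology ArithmeticFunction



lemma aux_rpow_mvt {α : ℝ} (hα : 0 ≤ α) {a b : ℝ} (ha : 0 ≤ a) (hab : a ≤ b) :
    (α + 1) * a ^ α * (b - a) ≤ b ^ (α + 1) - a ^ (α + 1) ∧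
      b ^ (α + 1) - a ^ (α + 1) ≤ (α + 1) * b ^ α * (b - a) := by
  rcases eq_or_lt_of_le hab with rfl | hlt
  · simp
  have h1 : (1:ℝ) ≤ α + 1 := by linarith
  have hderiv : ∀ x : ℝ, HasDerivAt (fun x : ℝ => x ^ (α+1)) ((α+1) * x ^ α) x := by
    intro x
    have := Real.hasDerivAt_rpow_const (x := x) (p := α + 1) (Or.inr h1)
    simpa using this
  obtain ⟨c, hc, hceq⟩ := exists_hasDerivAt_eq_slope (fun x : ℝ => x ^ (α+1))
    (fun x => (α+1) * x ^ α) hlt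
    (fun x _ => (hderiv x).continuousAt.continuousWithinAt)
    (fun x _ => hderiv x)
  have hba : (0:ℝ) < b - a := by linarith
  have hkey : b ^ (α+1) - a ^ (α+1) = (α+1) * c ^ α * (b - a) := by
    field_simp at hceq
    linarith [hceq]
  have hc0 : 0 ≤ c := le_of_lt (lt_of_le_of_lt ha hc.1)
  have hca : a ^ α ≤ c ^ α := Real.rpow_le_rpow ha hc.1.le hα
  have hcb : c ^ α ≤ b ^ α := Real.rpow_le_rpow hc0 hc.2.le hα
  have h2 : (0:ℝ) < α + 1 := by linarith
  constructor
  · rw [hkey]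
    gcongr
  · rw [hkey]
    gcongr

noncomputable def auxG (α : ℝ) (N : ℕ) : ℝ := ∑ i ∈ Finset.range N, ((i : ℝ) + 1) ^ α

lemma auxG_lower {α : ℝ} (hα : 0 ≤ α) (N : ℕ) :
    (N : ℝ) ^ (α + 1) / (α + 1) ≤ auxG α N := by
  have h2 : (0:ℝ) < α + 1 := by linarith
  rw [div_le_iff₀ h2]
  have htel : ∑ i ∈ range N, (((i:ℝ)+1) ^ (α+1) - (i:ℝ) ^ (α+1))
      = (N:ℝ) ^ (α+1) - (0:ℝ) ^ (α+1) := by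
    have := Finset.sum_range_sub (fun i : ℕ => ((i:ℕ):ℝ) ^ (α+1)) N
    simpa [Nat.cast_add] using this
  have h0 : (0:ℝ) ^ (α+1) = 0 := Real.zero_rpow (by linarith)
  rw [h0, sub_zero] at htel
  calc (N:ℝ) ^ (α+1) = ∑ i ∈ range N, (((i:ℝ)+1) ^ (α+1) - (i:ℝ) ^ (α+1)) := htel.symm
    _ ≤ ∑ i ∈ range N, (α+1) * ((i:ℝ)+1) ^ α * (((i:ℝ)+1) - i) := by
        apply Finset.sum_le_sum
        intro i _
        exact (aux_rpow_mvt hα (Nat.cast_nonneg i) (by linarith)).2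
    _ = auxG α N * (α+1) := by
        rw [auxG, Finset.sum_mul]
        exact Finset.sum_congr rfl fun i _ => by ring

lemma auxG_upper {α : ℝ} (hα : 0 ≤ α) (N : ℕ) :
    auxG α N ≤ ((N : ℝ) + 1) ^ (α + 1) / (α + 1) := by
  have h2 : (0:ℝ) < α + 1 := by linarith
  rw [le_div_iff₀ h2]
  have htel : ∑ i ∈ range N, (((i:ℝ)+1+1) ^ (α+1) - ((i:ℝ)+1) ^ (α+1))
      = ((N:ℝ)+1) ^ (α+1) - (1:ℝ) ^ (α+1) := by
    have := Finset.sum_range_sub (fun i : ℕ => (((i:ℕ):ℝ)+1) ^ (α+1)) N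
    simpa [Nat.cast_add] using this
  have h1 : (1:ℝ) ^ (α+1) = 1 := Real.one_rpow _
  calc auxG α N * (α+1) = ∑ i ∈ range N, (α+1) * ((i:ℝ)+1) ^ α * (((i:ℝ)+1+1) - ((i:ℝ)+1)) := by
        rw [auxG, Finset.sum_mul]
        exact Finset.sum_congr rfl fun i _ => by ring
    _ ≤ ∑ i ∈ range N, (((i:ℝ)+1+1) ^ (α+1) - ((i:ℝ)+1) ^ (α+1)) := by
        apply Finset.sum_le_sum
        intro i _
        exact (aux_rpow_mvt hα (by positivity) (by linarith)).1
    _ = ((N:ℝ)+1) ^ (α+1) - 1 := by rw [htel, h1]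
    _ ≤ ((N:ℝ)+1) ^ (α+1) := by linarith

lemma auxG_def (α : ℝ) (N : ℕ) : auxG α N = ∑ i ∈ Finset.range N, ((i : ℝ) + 1) ^ α := rfl


lemma tendsto_succ_div_self : Tendsto (fun N : ℕ => ((N:ℝ) + 1) / N) atTop (𝓝 1) := by
  have h : Tendsto (fun N : ℕ => 1 + 1/(N:ℝ)) atTop (𝓝 (1 + 0)) :=
    tendsto_const_nhds.add tendsto_one_div_atTop_nhds_zero_nat
  rw [add_zero] at h
  apply h.congr'
  filter_upwards [eventually_gt_atTop 0] with N hN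
  have : (N:ℝ) ≠ 0 := Nat.cast_ne_zero.mpr hN.ne'
  field_simp

lemma tendsto_one_add_inv_rpow (α : ℝ) :
    Tendsto (fun N : ℕ => (((N:ℝ) + 1) / N) ^ (α+1)) atTop (𝓝 1) := by
  have h2 : ContinuousAt (fun x : ℝ => x ^ (α+1)) 1 :=
    Real.continuousAt_rpow_const 1 (α+1) (Or.inl one_ne_zero)
  have := h2.tendsto.comp tendsto_succ_div_self
  simpa [Function.comp_def] using this

lemma tendsto_auxG_div {α : ℝ} (hα : 0 ≤ α) :
    Tendsto (fun N : ℕ => auxG α N / (N:ℝ) ^ (α+1)) atTop (𝓝 (1/(α+1))) := by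
  have h2 : (0:ℝ) < α + 1 := by linarith
  have hup : Tendsto (fun N : ℕ => (((N:ℝ) + 1) / N) ^ (α+1) / (α+1)) atTop (𝓝 (1/(α+1))) :=
    (tendsto_one_add_inv_rpow α).div_const _
  apply tendsto_of_tendsto_of_tendsto_of_le_of_le' tendsto_const_nhds hup
  · filter_upwards [eventually_gt_atTop 0] with N hN
    have hNp : (0:ℝ) < (N:ℝ) ^ (α+1) := Real.rpow_pos_of_pos (by exact_mod_cast hN) _
    rw [le_div_iff₀ hNp]
    calc 1/(α+1) * (N:ℝ)^(α+1) = (N:ℝ)^(α+1)/(α+1) := by ring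
      _ ≤ auxG α N := auxG_lower hα N
  · filter_upwards [eventually_gt_atTop 0] with N hN
    have hN0 : (0:ℝ) < (N:ℝ) := by exact_mod_cast hN
    have hNp : (0:ℝ) < (N:ℝ) ^ (α+1) := Real.rpow_pos_of_pos hN0 _
    rw [div_le_div_iff₀ hNp h2]
    calc auxG α N * (α+1) ≤ ((N:ℝ)+1) ^ (α+1) := by
          have := auxG_upper hα N
          rw [le_div_iff₀ h2] at this
          linarith
      _ = (((N:ℝ)+1)/N) ^ (α+1) * (N:ℝ)^(α+1) := by
          rw [← Real.mul_rpow (by positivity) (by positivity)]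
          congr 1
          field_simp


lemma sum_Icc_one_eq_range (f : ℕ → ℝ) (N : ℕ) :
    ∑ m ∈ Icc 1 N, f m = ∑ i ∈ range N, f (i+1) := by
  rw [← Finset.Ico_add_one_right_eq_Icc, Finset.sum_Ico_eq_sum_range]
  simp [add_comm]

lemma log_telescope (N : ℕ) :
    ∑ j ∈ range N, (Real.log ((j:ℝ)+1) - Real.log (j:ℝ)) = Real.log (N:ℝ) := by
  have := Finset.sum_range_sub (fun j : ℕ => Real.log (j:ℝ)) N
  simp only [Nat.cast_add, Nat.cast_one, Nat.cast_zero, Real.log_zero, sub_zero] at this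
  convert this using 2 with j

lemma key_identity {α : ℝ} (N : ℕ) :
    ∑ m ∈ Icc 1 N, (m:ℝ)^α * Real.log ((m:ℝ)/N)
      = -∑ j ∈ range N, (Real.log ((j:ℝ)+1) - Real.log (j:ℝ)) * auxG α j := by
  rcases Nat.eq_zero_or_pos N with rfl | hN
  · simp
  have hstep : ∀ m ∈ Icc 1 N, (m:ℝ)^α * Real.log ((m:ℝ)/N)
      = -∑ j ∈ Ico m N, (m:ℝ)^α * (Real.log ((j:ℝ)+1) - Real.log (j:ℝ)) := by
    intro m hm
    rw [mem_Icc] at hm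
    rw [← Finset.mul_sum, Finset.sum_Ico_eq_sub _ hm.2, log_telescope, log_telescope,
      Real.log_div (Nat.cast_ne_zero.mpr (by omega)) (by positivity)]
    ring
  rw [Finset.sum_congr rfl hstep, Finset.sum_neg_distrib, neg_inj]
  rw [Finset.sum_comm' (t' := Ico 1 N) (s' := fun j => Icc 1 j) (by
    intro m j
    simp only [mem_Icc, mem_Ico]
    omega)]
  have h0 : ∑ j ∈ range N, (Real.log ((j:ℝ)+1) - Real.log (j:ℝ)) * auxG α j
      = ∑ j ∈ Ico 1 N, (Real.log ((j:ℝ)+1) - Real.log (j:ℝ)) * auxG α j := by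
    rw [Finset.range_eq_Ico, Finset.sum_eq_sum_Ico_succ_bot hN]
    simp [auxG_def]
  rw [h0]
  apply Finset.sum_congr rfl
  intro j _
  rw [← Finset.sum_mul, sum_Icc_one_eq_range (fun m => (m:ℝ)^α) j, auxG_def]
  push_cast
  ring

lemma tendsto_natlog_ratio : Tendsto (fun j : ℕ => (j:ℝ) * Real.log (1 + 1/(j:ℝ))) atTop (𝓝 1) := by
  have := (Real.tendsto_mul_log_one_add_div_atTop 1).comp tendsto_natCast_atTop_atTop
  simpa [Function.comp_def] using this

lemma tendsto_div_succ_rpow (α : ℝ) :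
    Tendsto (fun j : ℕ => ((j:ℝ)/((j:ℝ)+1)) ^ α) atTop (𝓝 1) := by
  have h1 : Tendsto (fun j : ℕ => (j:ℝ)/((j:ℝ)+1)) atTop (𝓝 1) := by
    have h := (tendsto_succ_div_self.inv₀ one_ne_zero)
    rw [inv_one] at h
    apply h.congr'
    filter_upwards [eventually_gt_atTop 0] with j hj
    have h0 : (j:ℝ) ≠ 0 := Nat.cast_ne_zero.mpr hj.ne'
    have h1 : ((j:ℝ)+1) ≠ 0 := by positivity
    rw [inv_div]
  have h2 : ContinuousAt (fun x : ℝ => x ^ α) 1 :=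
    Real.continuousAt_rpow_const 1 α (Or.inl one_ne_zero)
  simpa [Function.comp_def] using h2.tendsto.comp h1

lemma tendsto_D_ratio {α : ℝ} (hα : 0 ≤ α) :
    Tendsto (fun j : ℕ =>
      ((Real.log ((j:ℝ)+1) - Real.log (j:ℝ)) * auxG α j - (1/(α+1)) * ((j:ℝ)+1)^α)
        / ((j:ℝ)+1)^α) atTop (𝓝 0) := by
  have hmain : Tendsto (fun j : ℕ =>
      ((j:ℝ) * Real.log (1 + 1/(j:ℝ))) * (auxG α j / (j:ℝ)^(α+1)) * (((j:ℝ)/((j:ℝ)+1)) ^ α)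
        - 1/(α+1)) atTop (𝓝 (1 * (1/(α+1)) * 1 - 1/(α+1))) := by
    exact (((tendsto_natlog_ratio.mul (tendsto_auxG_div hα)).mul
      (tendsto_div_succ_rpow α)).sub tendsto_const_nhds)
  rw [show (1:ℝ) * (1/(α+1)) * 1 - 1/(α+1) = 0 by ring] at hmain
  apply hmain.congr'
  filter_upwards [eventually_gt_atTop 0] with j hj
  have hj0 : (0:ℝ) < (j:ℝ) := by exact_mod_cast hj
  have hj1 : (0:ℝ) < (j:ℝ) + 1 := by linarith
  have hja : (0:ℝ) < (j:ℝ) ^ α := Real.rpow_pos_of_pos hj0 α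
  have hj1a : (0:ℝ) < ((j:ℝ)+1) ^ α := Real.rpow_pos_of_pos hj1 α
  have hlog : Real.log ((j:ℝ)+1) - Real.log (j:ℝ) = Real.log (1 + 1/(j:ℝ)) := by
    rw [← Real.log_div (by positivity) hj0.ne']
    congr 1
    field_simp
  have hpow : (j:ℝ)^(α+1) = (j:ℝ)^α * j := Real.rpow_add_one hj0.ne' α
  have hdivpow : ((j:ℝ)/((j:ℝ)+1)) ^ α = (j:ℝ)^α / ((j:ℝ)+1)^α :=
    Real.div_rpow hj0.le hj1.le α
  rw [hlog, hpow, hdivpow]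
  field_simp

lemma isLittleO_sumD {α : ℝ} (hα : 0 ≤ α) :
    (fun N : ℕ => ∑ j ∈ range N,
        ((Real.log ((j:ℝ)+1) - Real.log (j:ℝ)) * auxG α j - (1/(α+1)) * ((j:ℝ)+1)^α))
      =o[atTop] (fun N : ℕ => (N:ℝ)^(α+1)) := by
  have h2' : (0:ℝ) < α + 1 := by linarith
  have hg0 : ∀ j : ℕ, (0:ℝ) < ((j:ℝ)+1)^α := fun j => Real.rpow_pos_of_pos (by positivity) α
  have hD : (fun j : ℕ =>
      (Real.log ((j:ℝ)+1) - Real.log (j:ℝ)) * auxG α j - (1/(α+1)) * ((j:ℝ)+1)^α)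
      =o[atTop] (fun j : ℕ => ((j:ℝ)+1)^α) := by
    rw [isLittleO_iff_tendsto (fun j h => absurd h (hg0 j).ne')]
    exact tendsto_D_ratio hα
  have hsum := hD.sum_range (fun j => (hg0 j).le) (by
    apply tendsto_atTop_mono (fun N => ?_) tendsto_natCast_atTop_atTop
    calc (N:ℝ) = ∑ _j ∈ range N, (1:ℝ) := by simp
      _ ≤ ∑ j ∈ range N, ((j:ℝ)+1)^α := by
          apply Finset.sum_le_sum
          intro j _
          exact Real.one_le_rpow (by linarith [Nat.cast_nonneg (α := ℝ) j]) hα)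
  have hGO : (fun N : ℕ => ∑ j ∈ range N, ((j:ℝ)+1)^α) =O[atTop] (fun N : ℕ => (N:ℝ)^(α+1)) := by
    rw [isBigO_iff]
    refine ⟨2^(α+1)/(α+1), ?_⟩
    filter_upwards [eventually_ge_atTop 1] with N hN
    have hN0 : (1:ℝ) ≤ (N:ℝ) := by exact_mod_cast hN
    have hsum_nonneg : (0:ℝ) ≤ ∑ j ∈ range N, ((j:ℝ)+1)^α :=
      Finset.sum_nonneg fun j _ => (hg0 j).le
    rw [Real.norm_of_nonneg hsum_nonneg, Real.norm_of_nonneg (by positivity)]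
    calc ∑ j ∈ range N, ((j:ℝ)+1)^α = auxG α N := (auxG_def α N).symm
      _ ≤ ((N:ℝ)+1)^(α+1)/(α+1) := auxG_upper hα N
      _ ≤ (2*(N:ℝ))^(α+1)/(α+1) := by
          have := Real.rpow_le_rpow (x := (N:ℝ)+1) (by linarith) (y := 2*(N:ℝ)) (by linarith) (le_of_lt h2')
          gcongr
      _ = 2^(α+1)/(α+1) * (N:ℝ)^(α+1) := by
          rw [Real.mul_rpow (by norm_num) (by linarith)]
          ring
  exact hsum.trans_isBigO hGO

lemma lemmaR {α : ℝ} (hα : 0 ≤ α) :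
    Tendsto (fun N : ℕ => (∑ m ∈ Icc 1 N, (m:ℝ)^α * Real.log ((m:ℝ)/N)) / (N:ℝ)^(α+1))
      atTop (𝓝 (-(1/(α+1)^2))) := by
  have h2 : (0:ℝ) < α + 1 := by linarith
  have hDdiv : Tendsto (fun N : ℕ => (∑ j ∈ range N,
      ((Real.log ((j:ℝ)+1) - Real.log (j:ℝ)) * auxG α j - (1/(α+1)) * ((j:ℝ)+1)^α))
        / (N:ℝ)^(α+1)) atTop (𝓝 0) :=
    (isLittleO_sumD hα).tendsto_div_nhds_zero
  have hG := tendsto_auxG_div hα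
  have hcomb : Tendsto (fun N : ℕ => -((∑ j ∈ range N,
      ((Real.log ((j:ℝ)+1) - Real.log (j:ℝ)) * auxG α j - (1/(α+1)) * ((j:ℝ)+1)^α))
        / (N:ℝ)^(α+1)) - (1/(α+1)) * (auxG α N / (N:ℝ)^(α+1)))
      atTop (𝓝 (-0 - (1/(α+1)) * (1/(α+1)))) :=
    (hDdiv.neg).sub (tendsto_const_nhds.mul hG)
  rw [show -(0:ℝ) - (1/(α+1)) * (1/(α+1)) = -(1/(α+1)^2) by
    rw [neg_zero, zero_sub, div_mul_div_comm, ← sq, one_pow, sq]] at hcomb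
  apply hcomb.congr
  intro N
  rw [key_identity]
  have : ∑ j ∈ range N, (Real.log ((j:ℝ)+1) - Real.log (j:ℝ)) * auxG α j
      = (∑ j ∈ range N,
          ((Real.log ((j:ℝ)+1) - Real.log (j:ℝ)) * auxG α j - (1/(α+1)) * ((j:ℝ)+1)^α))
        + (1/(α+1)) * auxG α N := by
    rw [auxG_def, Finset.mul_sum, ← Finset.sum_add_distrib]
    apply Finset.sum_congr rfl
    intro j _
    ring
  rw [this]
  ring


noncomputable def auxF (α : ℝ) (n d : ℕ) : ℝ :=
  (ArithmeticFunction.moebius d : ℝ) * (d:ℝ)^(α-1) *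
    (∑ m ∈ Icc 1 (n/d), (m:ℝ)^α * Real.log ((d:ℝ)*m/n)) / (n:ℝ)^(α+1)

lemma logsum_lower (N : ℕ) :
    (N:ℝ) * Real.log N - N ≤ ∑ m ∈ Icc 1 N, Real.log m := by
  rw [sum_Icc_one_eq_range]
  have htel := Finset.sum_range_sub (fun i : ℕ => (i:ℝ) * Real.log i - i) N
  simp only [Nat.cast_zero, Real.log_zero, mul_zero, zero_mul, sub_zero, zero_sub, sub_neg_eq_add,
    add_zero] at htel
  have hstep : ∀ i ∈ range N,
      (((i:ℕ)+1:ℕ):ℝ) * Real.log ((i:ℕ)+1:ℕ) - ((i:ℕ)+1:ℕ) - ((i:ℝ) * Real.log i - i)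
        ≤ Real.log ((i+1:ℕ):ℝ) := by
    intro i _
    push_cast
    rcases Nat.eq_zero_or_pos i with rfl | hi
    · simp
    have hi0 : (0:ℝ) < (i:ℝ) := by exact_mod_cast hi
    have hlog : Real.log ((i:ℝ)+1) - Real.log i ≤ 1/(i:ℝ) := by
      rw [← Real.log_div (by positivity) hi0.ne']
      have := Real.log_le_sub_one_of_pos (x := ((i:ℝ)+1)/i) (by positivity)
      calc Real.log (((i:ℝ)+1)/i) ≤ ((i:ℝ)+1)/i - 1 := this
        _ = 1/(i:ℝ) := by field_simp; ring
    have hmul : (i:ℝ) * (Real.log ((i:ℝ)+1) - Real.log i) ≤ 1 := by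
      calc (i:ℝ) * (Real.log ((i:ℝ)+1) - Real.log i) ≤ (i:ℝ) * (1/(i:ℝ)) := by
            apply mul_le_mul_of_nonneg_left hlog hi0.le
        _ = 1 := by field_simp
    nlinarith [hmul]
  calc (N:ℝ) * Real.log N - N
      = ∑ i ∈ range N, ((((i:ℕ)+1:ℕ):ℝ) * Real.log ((i:ℕ)+1:ℕ) - ((i:ℕ)+1:ℕ)
          - ((i:ℝ) * Real.log i - i)) := by
        rw [htel]
    _ ≤ ∑ i ∈ range N, Real.log ((i+1:ℕ):ℝ) := Finset.sum_le_sum hstep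

lemma auxF_bound {α : ℝ} (hα : 0 ≤ α) {n : ℕ} (hn : 1 ≤ n) (d : ℕ) :
    |auxF α n d| ≤ (1 + Real.log 2) * (1/(d:ℝ)^2) := by
  have hlog2 : (0:ℝ) ≤ Real.log 2 := Real.log_nonneg (by norm_num)
  rcases Nat.eq_zero_or_pos d with rfl | hd
  · simp [auxF]
  rcases Nat.eq_zero_or_pos (n/d) with hnd | hnd
  · rw [auxF, hnd]
    simp only [Icc_self, show Icc 1 0 = (∅ : Finset ℕ) by rfl, Finset.sum_empty, mul_zero,
      zero_div, abs_zero]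
    positivity
  -- main case : 1 ≤ d, 1 ≤ N := n/d
  set N := n / d with hN
  have hdn : d ≤ n := by
    by_contra h
    push_neg at h
    have h0 : n / d = 0 := Nat.div_eq_of_lt h
    rw [← hN] at h0
    omega
  have hd0 : (0:ℝ) < (d:ℝ) := by exact_mod_cast hd
  have hn0 : (0:ℝ) < (n:ℝ) := by exact_mod_cast hn
  have hN0 : (0:ℝ) < (N:ℝ) := by exact_mod_cast hnd
  have hNx : (N:ℝ) ≤ (n:ℝ)/d := Nat.cast_div_le
  have hxN : (n:ℝ)/d < (N:ℝ) + 1 := by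
    rw [div_lt_iff₀ hd0]
    have hnat : n < (N + 1) * d := by
      have h1 : d * N + n % d = n := by rw [hN]; exact Nat.div_add_mod n d
      have h2 : n % d < d := Nat.mod_lt n hd
      calc n = d * N + n % d := h1.symm
        _ < d * N + d := by omega
        _ = (N + 1) * d := by ring
    calc (n:ℝ) < (((N:ℕ) + 1) * (d:ℕ) : ℕ) := by exact_mod_cast hnat
      _ = ((N:ℝ)+1) * d := by push_cast; ring
  -- bound the inner sum in absolute value
  have hterm : ∀ m ∈ Icc 1 N, |(m:ℝ)^α * Real.log ((d:ℝ)*m/n)|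
      ≤ (N:ℝ)^α * (Real.log ((n:ℝ)/d) - Real.log m) := by
    intro m hm
    rw [mem_Icc] at hm
    have hm0 : (0:ℝ) < (m:ℝ) := by exact_mod_cast hm.1
    have hdm : (d:ℝ) * m ≤ n := by
      have hnat : d * m ≤ n := by
        calc d * m ≤ d * N := Nat.mul_le_mul_left d hm.2
          _ = N * d := Nat.mul_comm d N
          _ ≤ n := by rw [hN]; exact Nat.div_mul_le_self n d
      exact_mod_cast hnat
    have hlogneg : Real.log ((d:ℝ)*m/n) ≤ 0 := by
      apply Real.log_nonpos
      · positivity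
      · rw [div_le_one hn0]; exact hdm
    rw [abs_mul, abs_of_nonneg (Real.rpow_nonneg hm0.le α), abs_of_nonpos hlogneg]
    have h1 : -Real.log ((d:ℝ)*m/n) = Real.log ((n:ℝ)/d) - Real.log m := by
      rw [← Real.log_inv, ← Real.log_div (show (n:ℝ)/d ≠ 0 by positivity) hm0.ne']
      congr 1
      field_simp
    rw [h1]
    apply mul_le_mul_of_nonneg_right
    · exact Real.rpow_le_rpow hm0.le (by exact_mod_cast hm.2) hα
    · rw [← h1]
      linarith [hlogneg]
  have hsumlog : ∑ m ∈ Icc 1 N, (Real.log ((n:ℝ)/d) - Real.log m)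
      ≤ (N:ℝ) * (1 + Real.log 2) := by
    have hls := logsum_lower N
    have hcard : (Icc 1 N).card = N := by simp
    have hsub : ∑ m ∈ Icc 1 N, (Real.log ((n:ℝ)/d) - Real.log m)
        = N * Real.log ((n:ℝ)/d) - ∑ m ∈ Icc 1 N, Real.log m := by
      rw [Finset.sum_sub_distrib, Finset.sum_const, hcard]
      push_cast
      ring
    rw [hsub]
    have hxle : (n:ℝ)/d ≤ 2 * N := by
      calc (n:ℝ)/d ≤ (N:ℝ) + 1 := hxN.le
        _ ≤ 2 * N := by
            have : (1:ℝ) ≤ (N:ℝ) := by exact_mod_cast hnd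
            linarith
    have hlogle : Real.log ((n:ℝ)/d) ≤ Real.log N + Real.log 2 := by
      calc Real.log ((n:ℝ)/d) ≤ Real.log (2 * N) := by
            apply Real.log_le_log (by positivity) hxle
        _ = Real.log 2 + Real.log N := Real.log_mul (by norm_num) hN0.ne'
        _ = Real.log N + Real.log 2 := by ring
    have := mul_le_mul_of_nonneg_left hlogle hN0.le
    nlinarith [hls]
  have hinner : |∑ m ∈ Icc 1 N, (m:ℝ)^α * Real.log ((d:ℝ)*m/n)|
      ≤ (N:ℝ)^α * ((N:ℝ) * (1 + Real.log 2)) := by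
    calc |∑ m ∈ Icc 1 N, (m:ℝ)^α * Real.log ((d:ℝ)*m/n)|
        ≤ ∑ m ∈ Icc 1 N, |(m:ℝ)^α * Real.log ((d:ℝ)*m/n)| := Finset.abs_sum_le_sum_abs _ _
      _ ≤ ∑ m ∈ Icc 1 N, (N:ℝ)^α * (Real.log ((n:ℝ)/d) - Real.log m) :=
          Finset.sum_le_sum hterm
      _ = (N:ℝ)^α * ∑ m ∈ Icc 1 N, (Real.log ((n:ℝ)/d) - Real.log m) := by
          rw [Finset.mul_sum]
      _ ≤ (N:ℝ)^α * ((N:ℝ) * (1 + Real.log 2)) := by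
          apply mul_le_mul_of_nonneg_left hsumlog (Real.rpow_nonneg hN0.le α)
  -- assemble
  have hmu : |(ArithmeticFunction.moebius d : ℝ)| ≤ 1 := by
    have := ArithmeticFunction.abs_moebius_le_one (n := d)
    exact_mod_cast this
  have hNp : (N:ℝ)^α * (N:ℝ) = (N:ℝ)^(α+1) := (Real.rpow_add_one hN0.ne' α).symm
  have hNple : (N:ℝ)^(α+1) ≤ ((n:ℝ)/d)^(α+1) :=
    Real.rpow_le_rpow hN0.le hNx (by linarith)
  rw [auxF, abs_div, abs_mul, abs_mul]
  rw [abs_of_nonneg (Real.rpow_nonneg hd0.le _), abs_of_nonneg (Real.rpow_nonneg hn0.le _)]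
  have hnp : (0:ℝ) < (n:ℝ)^(α+1) := Real.rpow_pos_of_pos hn0 _
  rw [div_le_iff₀ hnp]
  calc |(ArithmeticFunction.moebius d : ℝ)| * (d:ℝ)^(α-1) * |∑ m ∈ Icc 1 N, (m:ℝ)^α * Real.log ((d:ℝ)*m/n)|
      ≤ 1 * (d:ℝ)^(α-1) * ((N:ℝ)^α * ((N:ℝ) * (1 + Real.log 2))) := by
        apply mul_le_mul (by
          apply mul_le_mul_of_nonneg_right hmu (Real.rpow_nonneg hd0.le _)) hinner (abs_nonneg _)
        positivity
    _ = (d:ℝ)^(α-1) * (N:ℝ)^(α+1) * (1 + Real.log 2) := by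
        rw [← hNp]; ring
    _ ≤ (d:ℝ)^(α-1) * ((n:ℝ)/d)^(α+1) * (1 + Real.log 2) := by
        apply mul_le_mul_of_nonneg_right _ (by linarith)
        exact mul_le_mul_of_nonneg_left hNple (Real.rpow_nonneg hd0.le _)
    _ = (1 + Real.log 2) * (1/(d:ℝ)^2) * (n:ℝ)^(α+1) := by
        rw [Real.div_rpow hn0.le hd0.le]
        rw [show α - 1 = α + 1 - 2 by ring, Real.rpow_sub hd0]
        have h2 : (d:ℝ)^(2:ℝ) = (d:ℝ)^(2:ℕ) := by
          rw [← Real.rpow_natCast (d:ℝ) 2]; norm_num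
        rw [h2]
        have hd2 : ((d:ℝ)^(2:ℕ)) ≠ 0 := by positivity
        have hda : ((d:ℝ)^(α+1)) ≠ 0 := by positivity
        field_simp



lemma auxG_eq_Icc (α : ℝ) (N : ℕ) : auxG α N = ∑ m ∈ Icc 1 N, (m:ℝ)^α := by
  rw [auxG_def, sum_Icc_one_eq_range (fun m => (m:ℝ)^α) N]
  apply Finset.sum_congr rfl
  intro i _
  push_cast
  ring_nf

lemma tendsto_ratio_div {d : ℕ} (hd : 0 < d) :
    Tendsto (fun n : ℕ => ((n/d : ℕ):ℝ)/(n:ℝ)) atTop (𝓝 (1/(d:ℝ))) := by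
  have hd0 : (0:ℝ) < (d:ℝ) := by exact_mod_cast hd
  have hlow : Tendsto (fun n : ℕ => 1/(d:ℝ) - 1/(n:ℝ)) atTop (𝓝 (1/(d:ℝ) - 0)) :=
    tendsto_const_nhds.sub tendsto_one_div_atTop_nhds_zero_nat
  rw [sub_zero] at hlow
  apply tendsto_of_tendsto_of_tendsto_of_le_of_le' hlow tendsto_const_nhds
  · filter_upwards [eventually_gt_atTop 0] with n hn
    have hn0 : (0:ℝ) < (n:ℝ) := by exact_mod_cast hn
    have hfloor : (n:ℝ)/d - 1 ≤ ((n/d : ℕ):ℝ) := by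
      have hnat : n < (n/d + 1) * d := by
        have h1 : d * (n/d) + n % d = n := Nat.div_add_mod n d
        have h2 : n % d < d := Nat.mod_lt n hd
        calc n = d * (n/d) + n % d := h1.symm
          _ < d * (n/d) + d := by omega
          _ = (n/d + 1) * d := by ring
      have hcast : (n:ℝ) < (((n/d) + 1) * d : ℕ) := by exact_mod_cast hnat
      push_cast at hcast
      rw [sub_le_iff_le_add, div_le_iff₀ hd0]
      nlinarith
    rw [le_div_iff₀ hn0]
    calc (1/(d:ℝ) - 1/(n:ℝ)) * n = (n:ℝ)/d - 1 := by field_simp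
      _ ≤ ((n/d : ℕ):ℝ) := hfloor
  · filter_upwards [eventually_gt_atTop 0] with n hn
    have hn0 : (0:ℝ) < (n:ℝ) := by exact_mod_cast hn
    rw [div_le_div_iff₀ hn0 hd0]
    calc ((n/d : ℕ):ℝ) * d ≤ ((n:ℝ)/d) * d := by
          exact mul_le_mul_of_nonneg_right Nat.cast_div_le hd0.le
      _ = (n:ℝ) := by field_simp
      _ = 1 * n := (one_mul _).symm

lemma tendsto_auxF {α : ℝ} (hα : 0 ≤ α) {d : ℕ} (hd : 0 < d) :
    Tendsto (fun n : ℕ => auxF α n d) atTop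
      (𝓝 ((ArithmeticFunction.moebius d : ℝ)/(d:ℝ)^2 * (-(1/(α+1)^2)))) := by
  have hd0 : (0:ℝ) < (d:ℝ) := by exact_mod_cast hd
  have hNtend : Tendsto (fun n : ℕ => n / d) atTop atTop := (Filter.map_div_atTop_eq_nat d hd).le
  have hS1 : Tendsto (fun n : ℕ =>
      (∑ m ∈ Icc 1 (n/d), (m:ℝ)^α * Real.log ((m:ℝ)/((n/d : ℕ):ℝ))) / ((n/d:ℕ):ℝ)^(α+1))
      atTop (𝓝 (-(1/(α+1)^2))) := (lemmaR hα).comp hNtend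
  have hG1 : Tendsto (fun n : ℕ => auxG α (n/d) / ((n/d:ℕ):ℝ)^(α+1)) atTop (𝓝 (1/(α+1))) :=
    (tendsto_auxG_div hα).comp hNtend
  have hr := tendsto_ratio_div hd
  have hrp : Tendsto (fun n : ℕ => (((n/d:ℕ):ℝ)/(n:ℝ))^(α+1)) atTop (𝓝 ((1/(d:ℝ))^(α+1))) := by
    have hc : ContinuousAt (fun x : ℝ => x ^ (α+1)) (1/(d:ℝ)) :=
      Real.continuousAt_rpow_const _ _ (Or.inl (by positivity))
    exact hc.tendsto.comp hr
  have hlog : Tendsto (fun n : ℕ => Real.log ((d:ℝ)*((n/d:ℕ):ℝ)/(n:ℝ))) atTop (𝓝 0) := by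
    have h1 : Tendsto (fun n : ℕ => (d:ℝ)*(((n/d:ℕ):ℝ)/(n:ℝ))) atTop (𝓝 ((d:ℝ)*(1/(d:ℝ)))) :=
      tendsto_const_nhds.mul hr
    rw [show (d:ℝ)*(1/(d:ℝ)) = 1 by field_simp] at h1
    have hc : ContinuousAt Real.log 1 := Real.continuousAt_log one_ne_zero
    have := hc.tendsto.comp h1
    rw [Real.log_one] at this
    apply this.congr
    intro n
    simp [mul_div_assoc]
  have hmain : Tendsto (fun n : ℕ =>
      (ArithmeticFunction.moebius d : ℝ) * (d:ℝ)^(α-1) * ((((n/d:ℕ):ℝ)/(n:ℝ))^(α+1)) *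
        ((∑ m ∈ Icc 1 (n/d), (m:ℝ)^α * Real.log ((m:ℝ)/((n/d : ℕ):ℝ))) / ((n/d:ℕ):ℝ)^(α+1)
          + Real.log ((d:ℝ)*((n/d:ℕ):ℝ)/(n:ℝ)) * (auxG α (n/d) / ((n/d:ℕ):ℝ)^(α+1))))
      atTop (𝓝 ((ArithmeticFunction.moebius d : ℝ) * (d:ℝ)^(α-1) * ((1/(d:ℝ))^(α+1)) *
        (-(1/(α+1)^2) + 0 * (1/(α+1))))) :=
    (tendsto_const_nhds.mul hrp).mul (hS1.add (hlog.mul hG1))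
  have hval : (ArithmeticFunction.moebius d : ℝ) * (d:ℝ)^(α-1) * ((1/(d:ℝ))^(α+1)) *
      (-(1/(α+1)^2) + 0 * (1/(α+1)))
      = (ArithmeticFunction.moebius d : ℝ)/(d:ℝ)^2 * (-(1/(α+1)^2)) := by
    have h1 : (1/(d:ℝ))^(α+1) = 1/(d:ℝ)^(α+1) := by
      rw [Real.div_rpow (by norm_num) hd0.le, Real.one_rpow]
    have h2 : (d:ℝ)^(α-1) / (d:ℝ)^(α+1) = 1/(d:ℝ)^2 := by
      rw [← Real.rpow_sub hd0, show α-1-(α+1) = -(2:ℝ) by ring, Real.rpow_neg hd0.le,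
        show (2:ℝ) = ((2:ℕ):ℝ) by norm_num, Real.rpow_natCast, one_div]
    calc (ArithmeticFunction.moebius d : ℝ) * (d:ℝ)^(α-1) * ((1/(d:ℝ))^(α+1)) *
        (-(1/(α+1)^2) + 0 * (1/(α+1)))
        = (ArithmeticFunction.moebius d : ℝ) * ((d:ℝ)^(α-1)/(d:ℝ)^(α+1)) * (-(1/(α+1)^2)) := by
          rw [h1]; ring
      _ = (ArithmeticFunction.moebius d : ℝ)/(d:ℝ)^2 * (-(1/(α+1)^2)) := by
          rw [h2]; ring
  rw [hval] at hmain
  apply hmain.congr'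
  filter_upwards [eventually_ge_atTop d] with n hdn
  have hn1 : 1 ≤ n := le_trans hd hdn
  have hN1 : 1 ≤ n / d := (Nat.one_le_div_iff hd).mpr hdn
  set N := n / d with hN
  have hn0 : (0:ℝ) < (n:ℝ) := by exact_mod_cast hn1
  have hN0 : (0:ℝ) < (N:ℝ) := by exact_mod_cast hN1
  have hNp : (0:ℝ) < (N:ℝ)^(α+1) := Real.rpow_pos_of_pos hN0 _
  have hnp : (0:ℝ) < (n:ℝ)^(α+1) := Real.rpow_pos_of_pos hn0 _
  have hsplit : ∑ m ∈ Icc 1 N, (m:ℝ)^α * Real.log ((d:ℝ)*m/n)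
      = (∑ m ∈ Icc 1 N, (m:ℝ)^α * Real.log ((m:ℝ)/(N:ℝ)))
        + Real.log ((d:ℝ)*(N:ℝ)/(n:ℝ)) * (auxG α N) := by
    rw [auxG_eq_Icc, Finset.mul_sum, ← Finset.sum_add_distrib]
    apply Finset.sum_congr rfl
    intro m hm
    rw [mem_Icc] at hm
    have hm0 : (0:ℝ) < (m:ℝ) := by exact_mod_cast hm.1
    have hlogeq : Real.log ((d:ℝ)*m/n) = Real.log ((m:ℝ)/(N:ℝ)) + Real.log ((d:ℝ)*N/n) := by
      rw [← Real.log_mul (by positivity) (by positivity)]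
      congr 1
      field_simp
    rw [hlogeq]
    ring
  rw [auxF, hsplit]
  rw [Real.div_rpow hN0.le hn0.le]
  field_simp


lemma moebius_real_summable : Summable (fun d : ℕ => (moebius d : ℝ)/(d:ℝ)^2) := by
  apply Summable.of_norm_bounded (g := fun d : ℕ => 1/(d:ℝ)^2)
    (Real.summable_one_div_nat_pow.mpr one_lt_two)
  intro d
  rcases Nat.eq_zero_or_pos d with rfl | hd
  · simp
  have hd0 : (0:ℝ) < (d:ℝ)^2 := by positivity
  rw [Real.norm_eq_abs, abs_div, abs_of_nonneg hd0.le]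
  gcongr
  have := ArithmeticFunction.abs_moebius_le_one (n := d)
  exact_mod_cast this

lemma moebius_tsum_eq : ∑' d : ℕ, (moebius d : ℝ)/(d:ℝ)^2 = 6/Real.pi^2 := by
  have hs2 : (1:ℝ) < (2:ℂ).re := by norm_num
  have hL : LSeries (fun n => (moebius n : ℂ)) 2 = 6/(Real.pi:ℂ)^2 := by
    have h1 := ArithmeticFunction.LSeries_zeta_mul_Lseries_moebius (s := 2) hs2
    have h2 := ArithmeticFunction.LSeries_zeta_eq_riemannZeta (s := 2) hs2
    rw [h2, riemannZeta_two] at h1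
    have hpi : ((Real.pi:ℂ))^2 ≠ 0 := by
      simp [Real.pi_ne_zero]
    field_simp at h1 ⊢
    linear_combination h1
  have hsum := moebius_real_summable
  have hterm : ∀ n : ℕ, LSeries.term (fun n => (moebius n : ℂ)) 2 n
      = (((moebius n : ℝ)/(n:ℝ)^2 : ℝ) : ℂ) := by
    intro n
    rcases Nat.eq_zero_or_pos n with rfl | hn
    · simp [LSeries.term_zero]
    · rw [LSeries.term_of_ne_zero hn.ne']
      rw [show ((n:ℂ) ^ (2:ℂ)) = (n:ℂ)^(2:ℕ) by
        rw [show (2:ℂ) = ((2:ℕ):ℂ) by norm_num, Complex.cpow_natCast]]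
      push_cast
      ring
  have hC : HasSum (fun d : ℕ => (((moebius d : ℝ)/(d:ℝ)^2 : ℝ) : ℂ))
      ((∑' d : ℕ, (moebius d : ℝ)/(d:ℝ)^2 : ℝ) : ℂ) :=
    Complex.hasSum_ofReal.mpr hsum.hasSum
  have : ((∑' d : ℕ, (moebius d : ℝ)/(d:ℝ)^2 : ℝ) : ℂ) = 6/(Real.pi:ℂ)^2 := by
    rw [← hL, LSeries]
    rw [tsum_congr hterm]
    exact hC.tsum_eq.symm
  have h6 : ((6/Real.pi^2 : ℝ) : ℂ) = 6/(Real.pi:ℂ)^2 := by push_cast; ring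
  exact Complex.ofReal_injective (this.trans h6.symm)



lemma totient_moebius_real (k : ℕ) (hk : 0 < k) :
    (Nat.totient k : ℝ) = ∑ x ∈ k.divisorsAntidiagonal, (moebius x.1 : ℝ) * (x.2:ℝ) := by
  have h := (ArithmeticFunction.sum_eq_iff_sum_mul_moebius_eq (R := ℝ)
      (f := fun k => (Nat.totient k : ℝ)) (g := fun k => (k:ℝ))).mp ?_ k hk
  · exact h.symm
  · intro m hm
    exact_mod_cast congrArg (Nat.cast : ℕ → ℝ) (Nat.sum_totient m)

lemma decomp (α : ℝ) (n : ℕ) :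
    ∑ k ∈ Icc 1 n, (k:ℝ)^(α-1) * Real.log ((k:ℝ)/(n:ℝ)) * (Nat.totient k : ℝ)
      = ∑ d ∈ Icc 1 n, (moebius d : ℝ) * (d:ℝ)^(α-1) *
          ∑ m ∈ Icc 1 (n/d), (m:ℝ)^α * Real.log ((d:ℝ)*m/(n:ℝ)) := by
  have hstep : ∀ k ∈ Icc 1 n, (k:ℝ)^(α-1) * Real.log ((k:ℝ)/(n:ℝ)) * (Nat.totient k : ℝ)
      = ∑ x ∈ k.divisorsAntidiagonal,
          (moebius x.1 : ℝ) * (x.1:ℝ)^(α-1) * ((x.2:ℝ)^α * Real.log ((x.1:ℝ)*x.2/(n:ℝ))) := by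
    intro k hk
    rw [mem_Icc] at hk
    rw [totient_moebius_real k hk.1, Finset.mul_sum]
    apply Finset.sum_congr rfl
    intro x hx
    rw [Nat.mem_divisorsAntidiagonal] at hx
    have h1 : 0 < x.1 := Nat.pos_of_ne_zero (fun h0 => by simp [h0] at hx; omega)
    have h2 : 0 < x.2 := Nat.pos_of_ne_zero (fun h0 => by simp [h0] at hx; omega)
    have h10 : (0:ℝ) < (x.1:ℝ) := by exact_mod_cast h1
    have h20 : (0:ℝ) < (x.2:ℝ) := by exact_mod_cast h2
    have hk' : (k:ℝ) = (x.1:ℝ) * (x.2:ℝ) := by exact_mod_cast hx.1.symm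
    rw [hk']
    rw [Real.mul_rpow h10.le h20.le]
    have hx2 : (x.2:ℝ)^(α-1) * (x.2:ℝ) = (x.2:ℝ)^α := by
      rw [← Real.rpow_add_one h20.ne' (α-1)]
      norm_num
    calc ((x.1:ℝ)^(α-1) * (x.2:ℝ)^(α-1)) * Real.log ((x.1:ℝ)*x.2/n) * ((moebius x.1 : ℝ) * x.2)
        = (moebius x.1 : ℝ) * (x.1:ℝ)^(α-1) * (((x.2:ℝ)^(α-1) * (x.2:ℝ)) * Real.log ((x.1:ℝ)*x.2/n)) := by
          ring
      _ = (moebius x.1 : ℝ) * (x.1:ℝ)^(α-1) * ((x.2:ℝ)^α * Real.log ((x.1:ℝ)*x.2/(n:ℝ))) := by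
          rw [hx2]
  rw [Finset.sum_congr rfl hstep]
  have hswap : ∑ k ∈ Icc 1 n, ∑ x ∈ k.divisorsAntidiagonal,
        (moebius x.1 : ℝ) * (x.1:ℝ)^(α-1) * ((x.2:ℝ)^α * Real.log ((x.1:ℝ)*x.2/(n:ℝ)))
      = ∑ d ∈ Icc 1 n, ∑ m ∈ Icc 1 (n/d),
        (moebius d : ℝ) * (d:ℝ)^(α-1) * ((m:ℝ)^α * Real.log ((d:ℝ)*m/(n:ℝ))) := by
    rw [Finset.sum_sigma' (Icc 1 n) (fun k => k.divisorsAntidiagonal), 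
        Finset.sum_sigma' (Icc 1 n) (fun d => Icc 1 (n/d))]
    apply Finset.sum_nbij' (fun a => (⟨a.2.1, a.2.2⟩ : Σ _d : ℕ, ℕ))
      (fun b => (⟨b.1 * b.2, (b.1, b.2)⟩ : Σ _k : ℕ, ℕ × ℕ))
    · rintro ⟨k, d, m⟩ ha
      simp only [mem_sigma, mem_Icc, Nat.mem_divisorsAntidiagonal] at ha ⊢
      obtain ⟨⟨hk1, hkn⟩, hdm, _⟩ := ha
      have hd : 0 < d := Nat.pos_of_ne_zero (fun h0 => by simp [h0] at hdm; omega)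
      have hm : 0 < m := Nat.pos_of_ne_zero (fun h0 => by simp [h0] at hdm; omega)
      refine ⟨⟨hd, ?_⟩, hm, ?_⟩
      · calc d ≤ d * m := Nat.le_mul_of_pos_right d hm
          _ = k := hdm
          _ ≤ n := hkn
      · rw [Nat.le_div_iff_mul_le hd]
        calc m * d = d * m := Nat.mul_comm m d
          _ = k := hdm
          _ ≤ n := hkn
    · rintro ⟨d, m⟩ hb
      simp only [mem_sigma, mem_Icc] at hb
      obtain ⟨⟨hd1, hdn⟩, hm1, hmnd⟩ := hb
      have hdm1 : 1 ≤ d * m := Nat.one_le_iff_ne_zero.mpr (by positivity)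
      have hdmn : d * m ≤ n := by
        calc d * m ≤ d * (n/d) := Nat.mul_le_mul_left d hmnd
          _ = (n/d) * d := Nat.mul_comm _ _
          _ ≤ n := Nat.div_mul_le_self n d
      exact mem_sigma.mpr ⟨mem_Icc.mpr ⟨hdm1, hdmn⟩,
        Nat.mem_divisorsAntidiagonal.mpr ⟨rfl, by positivity⟩⟩
    · rintro ⟨k, d, m⟩ ha
      simp only [mem_sigma, mem_Icc, Nat.mem_divisorsAntidiagonal] at ha
      obtain ⟨_, hdm, _⟩ := ha
      simp [hdm]
    · rintro ⟨d, m⟩ _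
      rfl
    · rintro ⟨k, d, m⟩ _
      rfl
  rw [hswap]
  apply Finset.sum_congr rfl
  intro d _
  rw [Finset.mul_sum]

theorem stmt_10 (α : ℝ) (hα : 0 ≤ α) :
    Filter.Tendsto
      (fun n : ℕ => (1 / (n : ℝ) ^ (α + 1)) *
        ∑ k ∈ Finset.Icc 1 n, (k : ℝ) ^ (α - 1) * Real.log ((k : ℝ) / n) * Nat.totient k)
      Filter.atTop (nhds (-(6 / (Real.pi ^ 2 * (α + 1) ^ 2)))) := by
  have hbound_summable : Summable (fun d : ℕ => (1 + Real.log 2) * (1/(d:ℝ)^2)) :=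
    (Real.summable_one_div_nat_pow.mpr one_lt_two).mul_left _
  have hab : ∀ d : ℕ, Tendsto (fun n : ℕ => auxF α n d) atTop
      (𝓝 ((moebius d : ℝ)/(d:ℝ)^2 * (-(1/(α+1)^2)))) := by
    intro d
    rcases Nat.eq_zero_or_pos d with rfl | hd
    · simp only [auxF, Nat.cast_zero]
      simp only [ArithmeticFunction.map_zero, Int.cast_zero, zero_mul, zero_div]
      simpa using tendsto_const_nhds
    · exact tendsto_auxF hα hd
  have hb : ∀ᶠ n : ℕ in atTop, ∀ d : ℕ, ‖auxF α n d‖ ≤ (1 + Real.log 2) * (1/(d:ℝ)^2) := by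
    filter_upwards [eventually_ge_atTop 1] with n hn d
    exact auxF_bound hα hn d
  have hmain := tendsto_tsum_of_dominated_convergence hbound_summable hab hb
  have htsum : ∑' d : ℕ, ((moebius d : ℝ)/(d:ℝ)^2 * (-(1/(α+1)^2)))
      = -(6 / (Real.pi ^ 2 * (α + 1) ^ 2)) := by
    rw [tsum_mul_right, moebius_tsum_eq, mul_neg, div_mul_div_comm, mul_one]
  rw [htsum] at hmain
  apply hmain.congr'
  filter_upwards [eventually_ge_atTop 1] with n hn
  have hne : ∀ d ∉ Icc 1 n, auxF α n d = 0 := by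
    intro d hd
    rw [mem_Icc] at hd
    push_neg at hd
    rcases Nat.eq_zero_or_pos d with rfl | hd0
    · simp [auxF]
    · have hdn : n < d := hd hd0
      have : n / d = 0 := Nat.div_eq_of_lt hdn
      simp [auxF, this]
  rw [tsum_eq_sum hne]
  calc ∑ d ∈ Icc 1 n, auxF α n d
      = (∑ d ∈ Icc 1 n, (moebius d : ℝ) * (d:ℝ)^(α-1) *
          ∑ m ∈ Icc 1 (n/d), (m:ℝ)^α * Real.log ((d:ℝ)*m/(n:ℝ))) / (n:ℝ)^(α+1) := by
        rw [Finset.sum_div]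
        rfl
    _ = (∑ k ∈ Icc 1 n, (k:ℝ)^(α-1) * Real.log ((k:ℝ)/(n:ℝ)) * (Nat.totient k : ℝ)) / (n:ℝ)^(α+1) := by
        rw [decomp α n]
    _ = (1 / (n : ℝ) ^ (α + 1)) *
        ∑ k ∈ Finset.Icc 1 n, (k : ℝ) ^ (α - 1) * Real.log ((k : ℝ) / n) * Nat.totient k := by
        ring
end
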